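/- The plurality solution R^P satisfies top-aligned consistency (TCON) but satisfies neither concatenation consistency (CCON) nor bottom-aligned consistency (BCON). -/

import Mathlib

namespace SocRank

/-- A coalitional ranking (a weak order on a set of feasible nonempty coalitions),
represented by its list of equivalence classes, listed from best to worst. -/
structure CoalRanking (X : Type*) where
  classes : List (Finset (Finset X))
  class_nonempty : ∀ C ∈ classes, C.Nonempty
  coal_nonempty : ∀ C ∈ classes, ∀ S ∈ C, S.Nonempty
  classes_disjoint : classes.Pairwise Disjoint

namespace CoalRanking

variable {X : Type*}

/-- The coalition domain `𝒟(≿)` of a coalitional ranking. -/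
def domain [DecidableEq X] (r : CoalRanking X) : Finset (Finset X) :=
  r.classes.foldr (· ∪ ·) ∅

/-- The list of equivalence classes of the restriction of a ranking to a set `D`
of coalitions. -/
def restrictClasses [DecidableEq X] (r : CoalRanking X) (D : Finset (Finset X)) :
    List (Finset (Finset X)) :=
  (r.classes.map (· ∩ D)).filter (fun C => decide C.Nonempty)

/-- Merging two lists of equivalence classes by aligning them at the top. -/
def zipUnion [DecidableEq X] :
    List (Finset (Finset X)) → List (Finset (Finset X)) → List (Finset (Finset X))
  | [], M => M
  | L, [] => L
  | A :: L, B :: M => (A ∪ B) :: zipUnion L M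

/-- `r` is a sum of the disjoint rankings `r₁` and `r₂`: its domain is the union of
the two domains and its restriction to the domain of `rᵢ` is `rᵢ`. -/
def IsSum [DecidableEq X] (r r₁ r₂ : CoalRanking X) : Prop :=
  Disjoint r₁.domain r₂.domain ∧
  r.domain = r₁.domain ∪ r₂.domain ∧
  r.restrictClasses r₁.domain = r₁.classes ∧
  r.restrictClasses r₂.domain = r₂.classes

/-- `r` is the concatenation sum `r₁ · r₂` of the disjoint rankings `r₁` and `r₂`. -/
def IsConcatSum [DecidableEq X] (r r₁ r₂ : CoalRanking X) : Prop :=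
  Disjoint r₁.domain r₂.domain ∧ r.classes = r₁.classes ++ r₂.classes

/-- `r` is the top-aligned sum `r₁ ⊨ r₂` of the disjoint rankings `r₁` and `r₂`. -/
def IsTopAlignedSum [DecidableEq X] (r r₁ r₂ : CoalRanking X) : Prop :=
  Disjoint r₁.domain r₂.domain ∧ r.classes = zipUnion r₁.classes r₂.classes

/-- `r` is the bottom-aligned sum `r₁ ⫤ r₂` of the disjoint rankings `r₁` and `r₂`. -/
def IsBottomAlignedSum [DecidableEq X] (r r₁ r₂ : CoalRanking X) : Prop :=
  Disjoint r₁.domain r₂.domain ∧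
  r.classes = (zipUnion r₁.classes.reverse r₂.classes.reverse).reverse

/-- Renaming the individuals of a coalitional ranking by a permutation `σ` of `X`:
the ranking `≿^σ`. -/
def mapPerm [DecidableEq X] (σ : Equiv.Perm X) (r : CoalRanking X) : CoalRanking X where
  classes := r.classes.map (fun C => C.image (fun S => S.image σ))
  class_nonempty := by
    intro C hC
    simp only [List.mem_map] at hC
    obtain ⟨C₀, hC₀, rfl⟩ := hC
    exact (r.class_nonempty C₀ hC₀).image _
  coal_nonempty := by
    intro C hC S hS
    simp only [List.mem_map] at hC
    obtain ⟨C₀, hC₀, rfl⟩ := hC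
    simp only [Finset.mem_image] at hS
    obtain ⟨S₀, hS₀, rfl⟩ := hS
    exact (r.coal_nonempty C₀ hC₀ S₀ hS₀).image _
  classes_disjoint := by
    refine List.Pairwise.map _ (fun {A B} h => ?_) r.classes_disjoint
    exact (Finset.disjoint_image
      (Finset.image_injective σ.injective)).mpr h

/-- Renaming the coalitions of a coalitional ranking by a permutation `π` of the set of
coalitions (mapping nonempty sets to nonempty sets): the ranking `≿_π`. -/
def mapCoalPerm [DecidableEq X] (π : Equiv.Perm (Finset X))
    (hπ : ∀ S : Finset X, S.Nonempty → (π S).Nonempty) (r : CoalRanking X) :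
    CoalRanking X where
  classes := r.classes.map (fun C => C.image π)
  class_nonempty := by
    intro C hC
    simp only [List.mem_map] at hC
    obtain ⟨C₀, hC₀, rfl⟩ := hC
    exact (r.class_nonempty C₀ hC₀).image _
  coal_nonempty := by
    intro C hC S hS
    simp only [List.mem_map] at hC
    obtain ⟨C₀, hC₀, rfl⟩ := hC
    simp only [Finset.mem_image] at hS
    obtain ⟨S₀, hS₀, rfl⟩ := hS
    exact hπ S₀ (r.coal_nonempty C₀ hC₀ S₀ hS₀)
  classes_disjoint := by
    refine List.Pairwise.map _ (fun {A B} h => ?_) r.classes_disjoint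
    exact (Finset.disjoint_image π.injective).mpr h

end CoalRanking

open CoalRanking

variable {X : Type*}

/-- A social ranking solution: a map assigning to every coalitional ranking a binary
relation on the individuals. -/
abbrev SRSMap (X : Type*) := CoalRanking X → X → X → Prop

/-- The symmetric part `I` of the social ranking. -/
def Ind (R : SRSMap X) (r : CoalRanking X) (x y : X) : Prop := R r x y ∧ R r y x

/-- The asymmetric part `P` of the social ranking. -/
def Pref (R : SRSMap X) (r : CoalRanking X) (x y : X) : Prop := R r x y ∧ ¬ R r y x

/-- Conditions (1)-(4) of consistency for the triple `(r₁, r₂, r)`. -/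
def ConsistentAt (R : SRSMap X) (r₁ r₂ r : CoalRanking X) : Prop :=
  ∀ x y : X,
    (Ind R r₁ x y → Ind R r₂ x y → Ind R r x y) ∧
    (Ind R r₁ x y → Pref R r₂ x y → Pref R r x y) ∧
    (Pref R r₁ x y → Ind R r₂ x y → Pref R r x y) ∧
    (Pref R r₁ x y → Pref R r₂ x y → Pref R r x y)

/-- Consistency (CON). -/
def CON [DecidableEq X] (R : SRSMap X) : Prop :=
  ∀ r₁ r₂ r : CoalRanking X, IsSum r r₁ r₂ → ConsistentAt R r₁ r₂ r

/-- Concatenation consistency (CCON). -/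
def CCON [DecidableEq X] (R : SRSMap X) : Prop :=
  ∀ r₁ r₂ r : CoalRanking X, IsConcatSum r r₁ r₂ → ConsistentAt R r₁ r₂ r

/-- Top-aligned consistency (TCON). -/
def TCON [DecidableEq X] (R : SRSMap X) : Prop :=
  ∀ r₁ r₂ r : CoalRanking X, IsTopAlignedSum r r₁ r₂ → ConsistentAt R r₁ r₂ r

/-- Bottom-aligned consistency (BCON). -/
def BCON [DecidableEq X] (R : SRSMap X) : Prop :=
  ∀ r₁ r₂ r : CoalRanking X, IsBottomAlignedSum r r₁ r₂ → ConsistentAt R r₁ r₂ r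

/-- II-concatenation consistency. -/
def IICCON [DecidableEq X] (R : SRSMap X) : Prop :=
  ∀ r₁ r₂ r : CoalRanking X, IsConcatSum r r₁ r₂ →
    ∀ x y : X, Ind R r₁ x y → Ind R r₂ x y → Ind R r x y

/-- IP-concatenation consistency. -/
def IPCCON [DecidableEq X] (R : SRSMap X) : Prop :=
  ∀ r₁ r₂ r : CoalRanking X, IsConcatSum r r₁ r₂ →
    ∀ x y : X, Ind R r₁ x y → Pref R r₂ x y → Pref R r x y

/-- PI-concatenation consistency. -/
def PICCON [DecidableEq X] (R : SRSMap X) : Prop :=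
  ∀ r₁ r₂ r : CoalRanking X, IsConcatSum r r₁ r₂ →
    ∀ x y : X, Pref R r₁ x y → Ind R r₂ x y → Pref R r x y

/-- PP-concatenation consistency. -/
def PPCCON [DecidableEq X] (R : SRSMap X) : Prop :=
  ∀ r₁ r₂ r : CoalRanking X, IsConcatSum r r₁ r₂ →
    ∀ x y : X, Pref R r₁ x y → Pref R r₂ x y → Pref R r x y

/-- `x_k`: the number of coalitions of the class `C` containing `x`. -/
def cnt [DecidableEq X] (x : X) (C : Finset (Finset X)) : ℕ :=
  (C.filter (fun S => x ∈ S)).card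

/-- The vector `θ_≿(x) = (x₁, …, x_l)`. -/
def theta [DecidableEq X] (r : CoalRanking X) (x : X) : List ℕ :=
  r.classes.map (cnt x)

/-- `sign`: `1` on positive numbers, `0` otherwise. -/
def sgn (n : ℕ) : ℕ := if 0 < n then 1 else 0

/-- The vector `θ̇_≿(x) = (sign(x₁), …, sign(x_l))`. -/
def thetaDot [DecidableEq X] (r : CoalRanking X) (x : X) : List ℕ :=
  (theta r x).map sgn

/-- The lexicographic order `≥^L` on vectors (of equal length). -/
def lexGE : List ℕ → List ℕ → Prop
  | _, [] => True
  | [], _ :: _ => False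
  | a :: as, b :: bs => b < a ∨ (a = b ∧ lexGE as bs)

/-- The lexicographic excellence solution (lex-cel) `R^L`. -/
def lexcel [DecidableEq X] : SRSMap X := fun r x y => lexGE (theta r x) (theta r y)

/-- The sign lexicographic excellence solution (S lex-cel) `R^{SL}`. -/
def slexcel [DecidableEq X] : SRSMap X := fun r x y => lexGE (thetaDot r x) (thetaDot r y)

/-- The plurality solution `R^P`. -/
def plurality [DecidableEq X] : SRSMap X := fun r x y =>
  (theta r y).headD 0 ≤ (theta r x).headD 0

/-- The sign plurality solution `R^{SP}`. -/
def splurality [DecidableEq X] : SRSMap X := fun r x y =>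
  sgn ((theta r y).headD 0) ≤ sgn ((theta r x).headD 0)

/-- The anti-plurality solution `R^{AP}`. -/
def antiplurality [DecidableEq X] : SRSMap X := fun r x y =>
  (theta r x).getLastD 0 ≤ (theta r y).getLastD 0

/-- `e_≿(x)`: the largest `k` such that `x` belongs to every coalition of each of the
first `k` equivalence classes. -/
def eIIS [DecidableEq X] (r : CoalRanking X) (x : X) : ℕ :=
  (r.classes.takeWhile (fun C => decide (∀ S ∈ C, x ∈ S))).length

/-- The intersection initial segment solution (IIS) `R^{IIS}`. -/
def iis [DecidableEq X] : SRSMap X := fun r x y => eIIS r y ≤ eIIS r x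

/-- The index of the equivalence class a coalition belongs to. -/
def classIdx [DecidableEq X] (r : CoalRanking X) (S : Finset X) : ℕ :=
  r.classes.findIdx (fun C => decide (S ∈ C))

/-- `C_{xy}`: the number of CP comparisons in favour of `x` against `y`. -/
def cpCount [DecidableEq X] [Fintype X] (r : CoalRanking X) (x y : X) : ℕ :=
  ((Finset.univ : Finset (Finset X)).filter (fun S =>
    S.Nonempty ∧ x ∉ S ∧ y ∉ S ∧ insert x S ∈ r.domain ∧ insert y S ∈ r.domain ∧
    classIdx r (insert x S) < classIdx r (insert y S))).card

/-- The Ceteris Paribus majority solution `R^{CPM}`. -/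
def cpm [DecidableEq X] [Fintype X] : SRSMap X := fun r x y =>
  cpCount r y x ≤ cpCount r x y

/-- Neutrality (NT). -/
def NT [DecidableEq X] (R : SRSMap X) : Prop :=
  ∀ (σ : Equiv.Perm X) (r : CoalRanking X) (x y : X),
    R (r.mapPerm σ) (σ x) (σ y) ↔ R r x y

/-- Weak coalitional anonymity (WCA). -/
def WCA [DecidableEq X] (R : SRSMap X) : Prop :=
  ∀ (x y : X) (π : Equiv.Perm (Finset X))
    (hπ : ∀ S : Finset X, S.Nonempty → (π S).Nonempty),
    (∀ S : Finset X, x ∈ S → x ∈ π S) → (∀ S : Finset X, y ∈ S → y ∈ π S) →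
    ∀ r : CoalRanking X,
      (R (r.mapCoalPerm π hπ) x y ↔ R r x y) ∧ (R (r.mapCoalPerm π hπ) y x ↔ R r y x)

/-- The weak union very important person property (WUVIP). -/
def WUVIP (R : SRSMap X) : Prop :=
  ∀ (r : CoalRanking X) (A B : Finset (Finset X)), r.classes = [A, B] →
    ∀ x y : X, (∃ S ∈ A, x ∈ S) → (∀ S ∈ A, y ∉ S) → Pref R r x y

/-- All indifference all winners (AIAW). -/
def AIAW [DecidableEq X] (R : SRSMap X) : Prop :=
  ∀ r : CoalRanking X, r.classes.length ≤ 1 →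
    (∀ x y : X, (∃ S ∈ r.domain, x ∈ S) → (∃ S ∈ r.domain, y ∈ S) → Ind R r x y) ∧
    (∀ x z : X, (∃ S ∈ r.domain, x ∈ S) → (∀ S ∈ r.domain, z ∉ S) → Pref R r x z)

/-- Independence of the decomposition of the worst sets (IDWS). -/
def IDWS [DecidableEq X] (R : SRSMap X) : Prop :=
  ∀ (r r' : CoalRanking X) (L G : List (Finset (Finset X))) (W : Finset (Finset X)),
    L ≠ [] → r.classes = L ++ [W] → r'.classes = L ++ G →
    G.foldr (· ∪ ·) ∅ = W →
    ∀ x y : X, Pref R r x y → Pref R r' x y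

/-- Independence of the addition of the worst sets (IAWS). -/
def IAWS [DecidableEq X] (R : SRSMap X) : Prop :=
  ∀ (r r' : CoalRanking X) (G : Finset (Finset X)),
    r'.classes = r.classes ++ [G] → (∀ S ∈ G, S ∉ r.domain) →
    ∀ x y : X, Pref R r x y → Pref R r' x y

/-- Tops-only (TO). -/
def TO (R : SRSMap X) : Prop :=
  ∀ (r r' : CoalRanking X) (A : Finset (Finset X)),
    r.classes.head? = some A → r'.classes.head? = some A → R r = R r'

/-- The dual S lex-cel `R^{DSL}`. -/
def dslexcel [DecidableEq X] : SRSMap X := fun r x y =>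
  lexGE ((thetaDot r y).reverse) ((thetaDot r x).reverse)

/-- The inverse dual S lex-cel `R^{IDSL}`. -/
def idslexcel [DecidableEq X] : SRSMap X := fun r x y => dslexcel r y x

/-- The vector `θ̃_≿(x)` used by the S lex-cel with precedence on unanimity. -/
def tildeTheta [DecidableEq X] (r : CoalRanking X) (x : X) : List ℕ :=
  r.classes.map (fun C => if cnt x C = C.card then 2 else if 0 < cnt x C then 1 else 0)

/-- The S lex-cel with a particular precedence on unanimity `R^{SLUN}`. -/
def slun [DecidableEq X] : SRSMap X := fun r x y =>
  lexGE (tildeTheta r x) (tildeTheta r y)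

/-- The S sum score `Σ_k sign(x_k)`. -/
def ssum [DecidableEq X] (r : CoalRanking X) (x : X) : ℕ := (thetaDot r x).sum

/-- The S sum rule with tie-breaking by S lex-cel `R^{SSUM,SL}`. -/
def ssumSL [DecidableEq X] : SRSMap X := fun r x y =>
  ssum r y < ssum r x ∨ (ssum r x = ssum r y ∧ slexcel r x y)

end SocRank

open SocRank

open SocRank CoalRanking in
lemma headD_theta_topAligned {X : Type*} [DecidableEq X] {r r₁ r₂ : CoalRanking X}
    (h : IsTopAlignedSum r r₁ r₂) (x : X) :
    (theta r x).headD 0 = (theta r₁ x).headD 0 + (theta r₂ x).headD 0 := by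
  obtain ⟨hd, hc⟩ := h
  rcases h1 : r₁.classes with _ | ⟨A, L⟩
  · rw [h1] at hc
    simp [theta, hc, h1, zipUnion]
  · rcases h2 : r₂.classes with _ | ⟨B, M⟩
    · rw [h1, h2] at hc
      simp [theta, hc, h1, h2, zipUnion]
    · rw [h1, h2] at hc
      have hA : A ⊆ r₁.domain := by
        rw [CoalRanking.domain, h1]; exact Finset.subset_union_left
      have hB : B ⊆ r₂.domain := by
        rw [CoalRanking.domain, h2]; exact Finset.subset_union_left
      have hAB : Disjoint A B := hd.mono hA hB
      have hcnt : cnt x (A ∪ B) = cnt x A + cnt x B := by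
        rw [cnt, Finset.filter_union, Finset.card_union_of_disjoint
          (hAB.mono (Finset.filter_subset _ _) (Finset.filter_subset _ _))]
        rfl
      simp [theta, hc, h1, h2, zipUnion, hcnt]

open SocRank CoalRanking in
lemma plurality_ind_iff {X : Type*} [DecidableEq X] (r : CoalRanking X) (x y : X) :
    Ind (plurality : SRSMap X) r x y ↔
      (theta r x).headD 0 = (theta r y).headD 0 := by
  simp only [Ind, plurality]; omega

open SocRank CoalRanking in
lemma plurality_pref_iff {X : Type*} [DecidableEq X] (r : CoalRanking X) (x y : X) :
    Pref (plurality : SRSMap X) r x y ↔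
      (theta r y).headD 0 < (theta r x).headD 0 := by
  simp only [Pref, plurality]; omega

open SocRank CoalRanking in
/-- A coalitional ranking with a single equivalence class, itself a singleton. -/
def oneClass {X : Type*} (S : Finset X) (hS : S.Nonempty) : CoalRanking X where
  classes := [{S}]
  class_nonempty := by
    intro C hC; simp only [List.mem_singleton] at hC; subst hC
    exact Finset.singleton_nonempty _
  coal_nonempty := by
    intro C hC T hT; simp only [List.mem_singleton] at hC; subst hC
    simp only [Finset.mem_singleton] at hT; subst hT; exact hS
  classes_disjoint := List.pairwise_singleton _ _

open SocRank CoalRanking in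
/-- A coalitional ranking with two equivalence classes. -/
def twoClass {X : Type*} (A B : Finset (Finset X)) (hA : A.Nonempty) (hB : B.Nonempty)
    (hAn : ∀ S ∈ A, S.Nonempty) (hBn : ∀ S ∈ B, S.Nonempty) (hd : Disjoint A B) :
    CoalRanking X where
  classes := [A, B]
  class_nonempty := by
    intro C hC
    simp only [List.mem_cons, List.mem_singleton, List.not_mem_nil, or_false] at hC
    rcases hC with rfl | rfl
    · exact hA
    · exact hB
  coal_nonempty := by
    intro C hC S hS
    simp only [List.mem_cons, List.mem_singleton, List.not_mem_nil, or_false] at hC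
    rcases hC with rfl | rfl
    · exact hAn S hS
    · exact hBn S hS
  classes_disjoint := by
    refine List.Pairwise.cons ?_ (List.pairwise_singleton _ _)
    intro C hC
    simp only [List.mem_singleton] at hC; subst hC; exact hd

/-- plurality satisfies TCON but satisfies neither CCON nor BCON. -/
theorem plurality_tcon_not_ccon_not_bcon {X : Type*} [DecidableEq X] [Fintype X]
    (hX : 3 ≤ Fintype.card X) :
    TCON (plurality : SRSMap X) ∧ ¬ CCON (plurality : SRSMap X) ∧
      ¬ BCON (plurality : SRSMap X) := by
  -- three distinct individuals
  obtain ⟨t, -, ht⟩ := Finset.exists_subset_card_eq (s := (Finset.univ : Finset X)) (n := 3) hX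
  obtain ⟨a, b, c, hab, hac, hbc, -⟩ := Finset.card_eq_three.mp ht
  -- basic inequalities between the concrete coalitions
  have hca : ({c} : Finset X) ≠ {a} := by
    simp only [ne_eq, Finset.singleton_inj]; exact fun h => hac h.symm
  have hcab : ({c} : Finset X) ≠ {a, b} := by
    intro h
    have : a ∈ ({c} : Finset X) := by rw [h]; simp
    simp only [Finset.mem_singleton] at this
    exact hac this
  have haab : ({a} : Finset X) ≠ {a, b} := by
    intro h
    have : b ∈ ({a} : Finset X) := by rw [h]; simp
    simp only [Finset.mem_singleton] at this
    exact hab this.symm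
  -- counting facts
  have cnt_c_a : cnt a ({({c} : Finset X)} : Finset (Finset X)) = 0 := by
    simp [cnt, Finset.filter_singleton, hac]
  have cnt_c_b : cnt b ({({c} : Finset X)} : Finset (Finset X)) = 0 := by
    simp [cnt, Finset.filter_singleton, hbc]
  have cnt_a_a : cnt a ({({a} : Finset X)} : Finset (Finset X)) = 1 := by
    simp [cnt, Finset.filter_singleton]
  have cnt_a_b : cnt b ({({a} : Finset X)} : Finset (Finset X)) = 0 := by
    have : b ≠ a := fun h => hab h.symm
    simp [cnt, Finset.filter_singleton, this]
  -- the small rankings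
  have ha' : ({a} : Finset X).Nonempty := Finset.singleton_nonempty _
  have hc' : ({c} : Finset X).Nonempty := Finset.singleton_nonempty _
  set rc : CoalRanking X := oneClass {c} hc' with hrc
  set ra : CoalRanking X := oneClass {a} ha' with hra
  have hdom_rc : rc.domain = {({c} : Finset X)} := by
    simp [CoalRanking.domain, hrc, oneClass]
  have hdom_ra : ra.domain = {({a} : Finset X)} := by
    simp [CoalRanking.domain, hra, oneClass]
  have hdisj_ca : Disjoint rc.domain ra.domain := by
    rw [hdom_rc, hdom_ra, Finset.disjoint_singleton]
    exact hca
  -- Ind/Pref facts on the small rankings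
  have hind : Ind (plurality : SRSMap X) rc a b := by
    rw [plurality_ind_iff]
    simp [theta, hrc, oneClass, cnt_c_a, cnt_c_b]
  have hpref : Pref (plurality : SRSMap X) ra a b := by
    rw [plurality_pref_iff]
    simp [theta, hra, oneClass, cnt_a_a, cnt_a_b]
  refine ⟨?_, ?_, ?_⟩
  · -- TCON
    intro r₁ r₂ r h x y
    have hx := headD_theta_topAligned h x
    have hy := headD_theta_topAligned h y
    refine ⟨?_, ?_, ?_, ?_⟩ <;>
      · intro h1 h2
        simp only [plurality_ind_iff, plurality_pref_iff] at h1 h2 ⊢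
        omega
  · -- ¬ CCON
    intro hC
    -- the concatenation sum of rc and ra
    have hdisj2 : Disjoint ({({c} : Finset X)} : Finset (Finset X)) {({a} : Finset X)} := by
      rw [Finset.disjoint_singleton]; exact hca
    set r : CoalRanking X :=
      twoClass {({c} : Finset X)} {({a} : Finset X)}
        (Finset.singleton_nonempty _) (Finset.singleton_nonempty _)
        (by intro S hS; simp only [Finset.mem_singleton] at hS; subst hS; exact hc')
        (by intro S hS; simp only [Finset.mem_singleton] at hS; subst hS; exact ha')
        hdisj2 with hr
    have hsum : CoalRanking.IsConcatSum r rc ra := ⟨hdisj_ca, rfl⟩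
    have key := (hC rc ra r hsum a b).2.1 hind hpref
    rw [plurality_pref_iff] at key
    simp [theta, hr, twoClass, cnt_c_a, cnt_c_b] at key
  · -- ¬ BCON
    intro hB
    -- r₁ has classes [{{c}}, {{a,b}}], r₂ = ra, bottom-aligned sum r
    have hab' : ({a, b} : Finset X).Nonempty := ⟨a, by simp⟩
    set r₁ : CoalRanking X :=
      twoClass {({c} : Finset X)} {({a, b} : Finset X)}
        (Finset.singleton_nonempty _) (Finset.singleton_nonempty _)
        (by intro S hS; simp only [Finset.mem_singleton] at hS; subst hS; exact hc')
        (by intro S hS; simp only [Finset.mem_singleton] at hS; subst hS; exact hab')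
        (by rw [Finset.disjoint_singleton]; exact hcab) with hr1
    set r : CoalRanking X :=
      twoClass {({c} : Finset X)} ({({a, b} : Finset X)} ∪ {({a} : Finset X)})
        (Finset.singleton_nonempty _) ⟨{a, b}, by simp⟩
        (by intro S hS; simp only [Finset.mem_singleton] at hS; subst hS; exact hc')
        (by
          intro S hS
          simp only [Finset.mem_union, Finset.mem_singleton] at hS
          rcases hS with h | h <;> subst h
          · exact hab'
          · exact ha')
        (by
          rw [Finset.disjoint_left]
          intro S hS hS'
          simp only [Finset.mem_singleton] at hS; subst hS
          simp only [Finset.mem_union, Finset.mem_singleton] at hS'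
          rcases hS' with h | h
          · exact hcab h
          · exact hca h) with hr
    have hdisj3 : Disjoint r₁.domain ra.domain := by
      rw [hdom_ra, hr1]
      simp only [CoalRanking.domain, twoClass, List.foldr, Finset.union_empty]
      rw [Finset.disjoint_left]
      intro S hS hS'
      simp only [Finset.mem_union, Finset.mem_singleton] at hS hS'
      subst hS'
      rcases hS with h | h
      · exact hca h.symm
      · exact haab h
    have hsum : CoalRanking.IsBottomAlignedSum r r₁ ra := ⟨hdisj3, rfl⟩
    have hind1 : Ind (plurality : SRSMap X) r₁ a b := by
      rw [plurality_ind_iff]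
      simp [theta, hr1, twoClass, cnt_c_a, cnt_c_b]
    have key := (hB r₁ ra r hsum a b).2.1 hind1 hpref
    rw [plurality_pref_iff] at key
    simp [theta, hr, twoClass, cnt_c_a, cnt_c_b] at key
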